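/- For every natural number n ≥ 1 and real x with x ≠ 1, x ≠ −1, and 1 + 2x·cos(2πl/n) + x² ≠ 0 for all l, one has: if n is odd then ∑_{l=0}^{n-1} 1/(1 + 2x·cos(2πl/n) + x²) = n(xⁿ − 1)/((x² − 1)(xⁿ + 1)), and if n is even then the sum equals n(xⁿ + 1)/((x² − 1)(xⁿ − 1)). -/

import Mathlib

open Real Finset

private lemma aux_ne (n : ℕ) (hn : 1 ≤ n) (μ z : ℂ) (hμ : IsPrimitiveRoot μ n)
    (hz : ∀ l < n, z + μ ^ l ≠ 0) : z ^ n - (-1) ^ n ≠ 0 := by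
  intro hc
  have h1 : (-z) ^ n = 1 := by
    rw [neg_pow]
    have : z ^ n = (-1) ^ n := by linear_combination hc
    rw [this, ← pow_add, ← two_mul, pow_mul]
    norm_num
  haveI : NeZero n := ⟨by omega⟩
  obtain ⟨i, hi, hie⟩ := hμ.eq_pow_of_pow_eq_one h1
  exact hz i hi (by rw [hie]; ring)

private lemma aux_sum (n : ℕ) (hn : 1 ≤ n) (μ z : ℂ) (hμ : IsPrimitiveRoot μ n)
    (hz : ∀ l < n, z + μ ^ l ≠ 0) :
    (z ^ n - (-1) ^ n) * ∑ l ∈ Finset.range n, 1 / (z + μ ^ l) = n * z ^ (n - 1) := by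
  have hμn : μ ^ n = 1 := hμ.pow_eq_one
  rw [Finset.mul_sum]
  have step : ∀ l ∈ Finset.range n, (z ^ n - (-1) ^ n) * (1 / (z + μ ^ l)) =
      ∑ j ∈ Finset.range n, z ^ j * ((-1) ^ (n - 1 - j) * (μ ^ (n - 1 - j)) ^ l) := by
    intro l hl
    rw [Finset.mem_range] at hl
    have h1 : (-(μ ^ l)) ^ n = (-1) ^ n := by
      rw [neg_pow, ← pow_mul, mul_comm l n, pow_mul, hμn, one_pow, mul_one]
    have h2 := geom_sum₂_mul z (-(μ ^ l)) n
    rw [sub_neg_eq_add, h1] at h2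
    have h3 : (z ^ n - (-1) ^ n) * (1 / (z + μ ^ l)) =
        ∑ j ∈ Finset.range n, z ^ j * (-(μ ^ l)) ^ (n - 1 - j) := by
      rw [← h2]
      field_simp [hz l hl]
    rw [h3]
    refine Finset.sum_congr rfl fun j _ => ?_
    rw [neg_pow, ← pow_mul, mul_comm l (n - 1 - j), pow_mul]
  rw [Finset.sum_congr rfl step, Finset.sum_comm]
  have hmain : ∀ j ∈ Finset.range n, (∑ l ∈ Finset.range n,
      z ^ j * ((-1) ^ (n - 1 - j) * (μ ^ (n - 1 - j)) ^ l)) =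
      if j = n - 1 then (n : ℂ) * z ^ (n - 1) else 0 := by
    intro j hj
    rw [Finset.mem_range] at hj
    by_cases hje : j = n - 1
    · subst hje
      simp [Finset.sum_const, mul_comm]
    · have hk1 : 0 < n - 1 - j := by omega
      have hk2 : n - 1 - j < n := by omega
      have hne1 : μ ^ (n - 1 - j) ≠ 1 := hμ.pow_ne_one_of_pos_of_lt hk1.ne' hk2
      have hgeo : ∑ l ∈ Finset.range n, (μ ^ (n - 1 - j)) ^ l = 0 := by
        rw [geom_sum_eq hne1, ← pow_mul, mul_comm (n-1-j) n, pow_mul, hμn, one_pow,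
          sub_self, zero_div]
      rw [← Finset.mul_sum, ← Finset.mul_sum, hgeo, mul_zero, mul_zero, if_neg hje]
  rw [Finset.sum_congr rfl hmain, Finset.sum_ite_eq' (Finset.range n) (n-1)]
  simp [Nat.sub_lt_of_pos_le one_pos hn]

theorem rational_cos_sum (n : ℕ) (hn : 1 ≤ n) (x : ℝ) (hx1 : x ≠ 1) (hx2 : x ≠ -1)
    (h : ∀ l < n, 1 + 2 * x * Real.cos (2 * π * l / n) + x ^ 2 ≠ 0) :
    (Odd n → ∑ l ∈ Finset.range n, 1 / (1 + 2 * x * Real.cos (2 * π * l / n) + x ^ 2) =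
      n * (x ^ n - 1) / ((x ^ 2 - 1) * (x ^ n + 1))) ∧
    (Even n → ∑ l ∈ Finset.range n, 1 / (1 + 2 * x * Real.cos (2 * π * l / n) + x ^ 2) =
      n * (x ^ n + 1) / ((x ^ 2 - 1) * (x ^ n - 1))) := by
  have hn0 : (n : ℝ) ≠ 0 := Nat.cast_ne_zero.mpr (by omega)
  set X : ℂ := (x : ℂ) with hX
  set ω : ℂ := Complex.exp (2 * π * Complex.I / n) with hω
  have hprim : IsPrimitiveRoot ω n := Complex.isPrimitiveRoot_exp n (by omega)
  have hωl : ∀ l : ℕ, ω ^ l = Complex.exp ((2 * π * l / n : ℂ) * Complex.I) := by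
    intro l
    rw [show ((2 * π * l / n : ℂ)) * Complex.I = l * (2 * π * Complex.I / n) by ring,
      Complex.exp_nat_mul]
  have hω0 : ∀ l : ℕ, ω ^ l ≠ 0 := fun l => by rw [hωl]; exact Complex.exp_ne_zero _
  have hfac : ∀ l : ℕ, (1 + 2 * X * Complex.cos (2 * (π:ℂ) * l / n) + X ^ 2) =
      (X + ω ^ l) * (X + (ω⁻¹) ^ l) := by
    intro l
    have hc : 2 * Complex.cos (2 * (π:ℂ) * l / n) = ω ^ l + (ω⁻¹) ^ l := by
      rw [Complex.two_cos, inv_pow, hωl, ← Complex.exp_neg]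
      ring_nf
    have hinv : ω ^ l * (ω⁻¹) ^ l = 1 := by
      rw [inv_pow, mul_inv_cancel₀ (hω0 l)]
    calc (1 + 2 * X * Complex.cos (2 * (π:ℂ) * l / n) + X ^ 2)
        = 1 + X * (2 * Complex.cos (2 * (π:ℂ) * l / n)) + X ^ 2 := by ring
      _ = 1 + X * (ω ^ l + (ω⁻¹) ^ l) + X ^ 2 := by rw [hc]
      _ = (X + ω ^ l) * (X + (ω⁻¹) ^ l) := by
          rw [mul_add X, add_mul, mul_add, mul_add, hinv]; ring
  have hden : ∀ l < n, (X + ω ^ l) ≠ 0 ∧ (X + (ω⁻¹) ^ l) ≠ 0 := by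
    intro l hl
    have hC : ((1 + 2 * x * Real.cos (2 * π * l / n) + x ^ 2 : ℝ) : ℂ) ≠ 0 :=
      Complex.ofReal_ne_zero.mpr (h l hl)
    rw [show ((1 + 2 * x * Real.cos (2 * π * l / n) + x ^ 2 : ℝ) : ℂ) =
      1 + 2 * X * Complex.cos (2 * (π:ℂ) * l / n) + X ^ 2 by
        push_cast [Complex.ofReal_cos]; ring_nf; simp only [hX]; ring, hfac l] at hC
    exact ⟨fun h0 => hC (by rw [h0, zero_mul]), fun h0 => hC (by rw [h0, mul_zero])⟩
  have hx2c : X ^ 2 - 1 ≠ 0 := by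
    simp only [hX]
    intro hc
    have : (x : ℂ) ^ 2 = 1 := by linear_combination hc
    have h2 : x ^ 2 = 1 := by exact_mod_cast this
    have h3 : (x - 1) * (x + 1) = 0 := by nlinarith
    rcases mul_eq_zero.mp h3 with h' | h'
    · exact hx1 (by linarith)
    · exact hx2 (by linarith)
  have hprim' : IsPrimitiveRoot ω⁻¹ n := hprim.inv
  have hA := aux_sum n hn ω X hprim (fun l hl => (hden l hl).1)
  have hB := aux_sum n hn (ω⁻¹) X hprim' (fun l hl => (hden l hl).2)
  have hD : X ^ n - (-1) ^ n ≠ 0 := aux_ne n hn ω X hprim (fun l hl => (hden l hl).1)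
  have hXpow : X * X ^ (n - 1) = X ^ n := by
    rw [← pow_succ']; congr 1; omega
  have hGA : ∑ l ∈ Finset.range n, 1 / (X + ω ^ l) = n * X ^ (n - 1) / (X ^ n - (-1) ^ n) := by
    rw [eq_div_iff hD]; linear_combination hA
  have hGB : ∑ l ∈ Finset.range n, 1 / (X + (ω⁻¹) ^ l) =
      n * X ^ (n - 1) / (X ^ n - (-1) ^ n) := by
    rw [eq_div_iff hD]; linear_combination hB
  have hterm : ∀ l ∈ Finset.range n, (1 : ℂ) / ((X + ω ^ l) * (X + (ω⁻¹) ^ l)) =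
      (X / (X + ω ^ l) + X / (X + (ω⁻¹) ^ l) - 1) / (X ^ 2 - 1) := by
    intro l hl
    rw [Finset.mem_range] at hl
    have h1 := (hden l hl).1
    have h2 := (hden l hl).2
    have hz0 := hω0 l
    have h3 : X / (X + ω ^ l) + X / (X + (ω⁻¹) ^ l) - 1 =
        (X ^ 2 - 1) / ((X + ω ^ l) * (X + (ω⁻¹) ^ l)) := by
      rw [div_add_div _ _ h1 h2, div_sub_one (mul_ne_zero h1 h2)]
      congr 1
      rw [inv_pow]
      linear_combination -(mul_inv_cancel₀ hz0)
    rw [h3]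
    field_simp
  have key : ((∑ l ∈ Finset.range n, 1 / (1 + 2 * x * Real.cos (2 * π * l / n) + x ^ 2) : ℝ) : ℂ)
      = n * (X ^ n + (-1) ^ n) / ((X ^ 2 - 1) * (X ^ n - (-1) ^ n)) := by
    push_cast [Complex.ofReal_cos]
    calc ∑ l ∈ Finset.range n, 1 / (1 + 2 * X * Complex.cos (2 * (π:ℂ) * l / n) + X ^ 2)
        = ∑ l ∈ Finset.range n,
            (X / (X + ω ^ l) + X / (X + (ω⁻¹) ^ l) - 1) / (X ^ 2 - 1) := by
          refine Finset.sum_congr rfl fun l hl => ?_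
          rw [hfac l, hterm l hl]
      _ = ((∑ l ∈ Finset.range n, X / (X + ω ^ l)) +
            (∑ l ∈ Finset.range n, X / (X + (ω⁻¹) ^ l)) - n) / (X ^ 2 - 1) := by
          rw [← Finset.sum_div, Finset.sum_sub_distrib, Finset.sum_add_distrib,
            Finset.sum_const, Finset.card_range, nsmul_eq_mul, mul_one]
      _ = (X * (∑ l ∈ Finset.range n, 1 / (X + ω ^ l)) +
            X * (∑ l ∈ Finset.range n, 1 / (X + (ω⁻¹) ^ l)) - n) / (X ^ 2 - 1) := by
          simp only [Finset.mul_sum, mul_one_div]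
      _ = (X * (n * X ^ (n - 1) / (X ^ n - (-1) ^ n)) +
            X * (n * X ^ (n - 1) / (X ^ n - (-1) ^ n)) - n) / (X ^ 2 - 1) := by
          rw [hGA, hGB]
      _ = (n * X ^ n / (X ^ n - (-1) ^ n) +
            n * X ^ n / (X ^ n - (-1) ^ n) - n) / (X ^ 2 - 1) := by
          have hXG : X * ((n : ℂ) * X ^ (n - 1) / (X ^ n - (-1) ^ n)) =
              (n : ℂ) * X ^ n / (X ^ n - (-1) ^ n) := by
            rw [← mul_div_assoc]
            congr 1
            rw [← hXpow]; ring
          rw [hXG]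
      _ = n * (X ^ n + (-1) ^ n) / ((X ^ 2 - 1) * (X ^ n - (-1) ^ n)) := by
          field_simp
          ring
  constructor
  · intro hodd
    have hm : ((-1 : ℂ)) ^ n = -1 := hodd.neg_one_pow
    rw [hm] at key
    have h2 : ((n * (x ^ n - 1) / ((x ^ 2 - 1) * (x ^ n + 1)) : ℝ) : ℂ)
        = n * (X ^ n + -1) / ((X ^ 2 - 1) * (X ^ n - -1)) := by
      push_cast; ring
    exact Complex.ofReal_inj.mp (key.trans h2.symm)
  · intro heven
    have hm : ((-1 : ℂ)) ^ n = 1 := heven.neg_one_pow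
    rw [hm] at key
    have h2 : ((n * (x ^ n + 1) / ((x ^ 2 - 1) * (x ^ n - 1)) : ℝ) : ℂ)
        = n * (X ^ n + 1) / ((X ^ 2 - 1) * (X ^ n - 1)) := by
      push_cast; ring
    exact Complex.ofReal_inj.mp (key.trans h2.symm)
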